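/- Let g : [0,∞) → (0,∞) be strictly positive and left-continuous, and suppose Γ : [0,∞) → [0,∞) is continuous, Γ(0)=0, and satisfies Γ(t) = ∫₀ᵗ g(Γ(s)) ds. Then Γ is a bijection from [0,∞) onto its range, and its inverse satisfies Γ⁻¹(t) = ∫₀ᵗ 1/g(s) ds for all t in the range of Γ. -/

import Mathlib

open MeasureTheory intervalIntegral Set

open Filter Topology in
/-- A function that is positive on `[0,∞)` and left-continuous on `(0,∞)` agrees on `(0,∞)`
with a measurable, everywhere-positive function. -/
lemma measurable_mod_aux (g : ℝ → ℝ)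
    (hg_pos : ∀ s, 0 ≤ s → 0 < g s)
    (hg_left : ∀ s, 0 < s → ContinuousWithinAt g (Set.Iic s) s) :
    ∃ G : ℝ → ℝ, Measurable G ∧ (∀ x, 0 < x → G x = g x) ∧ (∀ x, 0 < G x) := by
  classical
  refine ⟨fun x => if 0 < x then g x else g 1, ?_, fun x hx => by simp [hx], fun x => ?_⟩
  case refine_2 =>
    by_cases hx : 0 < x
    · simpa [hx] using hg_pos x hx.le
    · simpa [hx] using hg_pos 1 one_pos.le
  set c : ℕ → ℝ → ℝ := fun n x => ((⌈((n : ℝ) + 1) * x⌉ : ℝ) - 1) / ((n : ℝ) + 1) with hc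
  have hnpos : ∀ n : ℕ, (0:ℝ) < (n : ℝ) + 1 := fun n => by positivity
  have hclt : ∀ n x, c n x < x := by
    intro n x
    rw [hc, div_lt_iff₀ (hnpos n)]
    have h := Int.ceil_lt_add_one (((n : ℝ) + 1) * x)
    nlinarith [h]
  have hcge : ∀ (n : ℕ) (x : ℝ), x - 1 / ((n : ℝ) + 1) ≤ c n x := by
    intro n x
    rw [hc, le_div_iff₀ (hnpos n)]
    have h := Int.le_ceil (((n : ℝ) + 1) * x)
    have h2 : (1 / ((n : ℝ) + 1)) * ((n : ℝ) + 1) = 1 := by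
      field_simp
    nlinarith [h]
  set A : ℕ → ℝ → ℝ := fun n x => if 0 < c n x then g (c n x) else g 1 with hA
  have hAmeas : ∀ n, Measurable (A n) := by
    intro n
    have hceil : Measurable fun x : ℝ => (⌈((n : ℝ) + 1) * x⌉ : ℤ) :=
      Int.measurable_ceil.comp (measurable_id.const_mul _)
    have heq : A n = (fun k : ℤ => if 0 < ((k : ℝ) - 1) / ((n : ℝ) + 1) then
        g (((k : ℝ) - 1) / ((n : ℝ) + 1)) else g 1) ∘ (fun x : ℝ => ⌈((n : ℝ) + 1) * x⌉) := by
      funext x; simp [hA, hc]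
    rw [heq]
    exact (measurable_of_countable _).comp hceil
  have htend : Tendsto A atTop (𝓝 fun x => if 0 < x then g x else g 1) := by
    rw [tendsto_pi_nhds]
    intro x
    rcases lt_or_ge 0 x with hx | hx
    · have hc_tend : Tendsto (fun n => c n x) atTop (𝓝 x) := by
        refine tendsto_of_tendsto_of_tendsto_of_le_of_le
          (g := fun n : ℕ => x - 1 / ((n : ℝ) + 1)) (h := fun _ : ℕ => x) ?_ ?_
          (fun n => hcge n x) (fun n => (hclt n x).le)
        · simpa using tendsto_const_nhds.sub (tendsto_one_div_add_atTop_nhds_zero_nat (𝕜 := ℝ))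
        · exact tendsto_const_nhds
      have hc_tendW : Tendsto (fun n => c n x) atTop (𝓝[Set.Iic x] x) :=
        tendsto_nhdsWithin_of_tendsto_nhds_of_eventually_within _ hc_tend
          (Eventually.of_forall fun n => (hclt n x).le)
      have hgc : Tendsto (fun n => g (c n x)) atTop (𝓝 (g x)) :=
        (hg_left x hx).tendsto.comp hc_tendW
      have hsmall : ∀ᶠ n : ℕ in atTop, 1 / ((n : ℝ) + 1) < x :=
        tendsto_one_div_add_atTop_nhds_zero_nat.eventually_lt_const hx
      have hev : ∀ᶠ n in atTop, A n x = g (c n x) := by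
        filter_upwards [hsmall] with n hn
        have hpos : 0 < c n x := lt_of_lt_of_le (by linarith) (hcge n x)
        simp [hA, hpos]
      simp only [hx, if_pos]
      exact hgc.congr' (by filter_upwards [hev] with n h using h.symm)
    · have hAx : ∀ n, A n x = g 1 := by
        intro n
        have h1 : ((n : ℝ) + 1) * x ≤ 0 := mul_nonpos_of_nonneg_of_nonpos (hnpos n).le hx
        have h2 : (⌈((n : ℝ) + 1) * x⌉ : ℤ) ≤ 0 := Int.ceil_le.mpr (by exact_mod_cast h1)
        have h3 : ¬ (0 < c n x) := by
          rw [hc, not_lt]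
          apply div_nonpos_of_nonpos_of_nonneg _ (hnpos n).le
          have : ((⌈((n : ℝ) + 1) * x⌉ : ℤ) : ℝ) ≤ 0 := by exact_mod_cast h2
          linarith
        simp [hA, h3]
      simp only [hx.not_gt, if_neg, not_false_iff]
      simpa [hAx] using (tendsto_const_nhds : Tendsto (fun _ : ℕ => g 1) atTop (𝓝 (g 1)))
  exact measurable_of_tendsto_metrizable hAmeas htend

/-- If `g` is strictly positive and left-continuous, and `Γ` is continuous with
`Γ(0) = 0` solving `Γ(t) = ∫₀ᵗ g(Γ(s)) ds`, then `Γ` is a bijection from `[0,∞)`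
onto its range, and its inverse satisfies `Γ⁻¹(t) = ∫₀ᵗ 1/g(s) ds` on the range. -/
theorem stmt1 (g : ℝ → ℝ) (Γ : ℝ → ℝ)
    (hg_pos : ∀ s, 0 ≤ s → 0 < g s)
    (hg_left : ∀ s, 0 < s → ContinuousWithinAt g (Set.Iic s) s)
    (hΓ_cont : Continuous Γ)
    (hΓ0 : Γ 0 = 0)
    (hΓ_nonneg : ∀ t, 0 ≤ t → 0 ≤ Γ t)
    (hΓ_int : ∀ t, 0 ≤ t → IntervalIntegrable (fun s => g (Γ s)) volume 0 t)
    (hΓ : ∀ t, 0 ≤ t → Γ t = ∫ s in (0:ℝ)..t, g (Γ s)) :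
    Set.BijOn Γ (Set.Ici (0:ℝ)) (Γ '' Set.Ici (0:ℝ)) ∧
      ∀ t ∈ Γ '' Set.Ici (0:ℝ),
        Function.invFunOn Γ (Set.Ici (0:ℝ)) t = ∫ s in (0:ℝ)..t, 1 / g s := by
  obtain ⟨G, hGm, hGg, hGpos⟩ := measurable_mod_aux g hg_pos hg_left
  -- strict monotonicity of Γ on [0,∞)
  have hmono : StrictMonoOn Γ (Set.Ici (0:ℝ)) := by
    rintro a (ha : (0:ℝ) ≤ a) b (hb : (0:ℝ) ≤ b) hab
    have hint : IntervalIntegrable (fun s => g (Γ s)) volume a b := by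
      refine (hΓ_int b hb).mono_set ?_
      rw [Set.uIcc_of_le hab.le, Set.uIcc_of_le hb]
      exact Set.Icc_subset_Icc ha le_rfl
    have hpos : 0 < ∫ s in a..b, g (Γ s) :=
      intervalIntegral_pos_of_pos_on hint
        (fun x hx => hg_pos _ (hΓ_nonneg x (ha.trans hx.1.le))) hab
    have hdiff : Γ b - Γ a = ∫ s in a..b, g (Γ s) := by
      rw [hΓ a ha, hΓ b hb]
      exact intervalIntegral.integral_interval_sub_left (hΓ_int b hb) (hΓ_int a ha)
    linarith
  have hmonoM : MonotoneOn Γ (Set.Ici (0:ℝ)) := hmono.monotoneOn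
  have hΓpos : ∀ x : ℝ, 0 < x → 0 < Γ x := by
    intro x hx
    have := hmono (Set.self_mem_Ici) (show x ∈ Set.Ici (0:ℝ) from hx.le) hx
    rwa [hΓ0] at this
  have hinj : Set.InjOn Γ (Set.Ici (0:ℝ)) := hmono.injOn
  -- left derivative of Γ
  have hDeriv : ∀ x : ℝ, 0 < x → HasDerivWithinAt Γ (g (Γ x)) (Set.Iic x) x := by
    intro x hx
    have hint := hΓ_int x hx.le
    have hIoi : Set.Ioi (0:ℝ) ∈ nhdsWithin x (Set.Iic x) :=
      mem_nhdsWithin_of_mem_nhds (Ioi_mem_nhds hx)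
    have hmeas : StronglyMeasurableAtFilter (fun s => g (Γ s)) (nhdsWithin x (Set.Iic x)) volume := by
      refine ⟨Set.Ioi 0, hIoi, ?_⟩
      refine ((hGm.comp hΓ_cont.measurable).aestronglyMeasurable).congr ?_
      refine ((ae_restrict_iff' measurableSet_Ioi).2 (Filter.Eventually.of_forall fun s hs => ?_))
      exact hGg _ (hΓpos s hs)
    have hcont : ContinuousWithinAt (fun s => g (Γ s)) (Set.Iic x) x := by
      have h1 : ContinuousWithinAt g (Set.Iic (Γ x)) (Γ x) := hg_left _ (hΓpos x hx)
      refine h1.tendsto.comp ?_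
      rw [tendsto_nhdsWithin_iff]
      constructor
      · exact hΓ_cont.continuousAt.continuousWithinAt
      · filter_upwards [self_mem_nhdsWithin, hIoi] with s hs hs0
        exact hmonoM (show s ∈ Set.Ici (0:ℝ) from Set.mem_Ici.2 (Set.mem_Ioi.1 hs0).le)
          (show x ∈ Set.Ici (0:ℝ) from hx.le) hs
    have hprim : HasDerivWithinAt (fun t => ∫ s in (0:ℝ)..t, g (Γ s)) (g (Γ x))
        (Set.Iic x) x :=
      intervalIntegral.integral_hasDerivWithinAt_right hint hmeas hcont
    refine hprim.congr_of_eventuallyEq ?_ (hΓ x hx.le)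
    filter_upwards [hIoi] with s hs
    exact hΓ s hs.le
  -- the key identity
  have key : ∀ u : ℝ, 0 ≤ u → (∫ s in (0:ℝ)..(Γ u), 1 / g s) = u := by
    intro u hu
    rcases eq_or_lt_of_le hu with rfl | hu0
    · rw [← hΓ0]; simp [hΓ0]
    set T := Γ u with hT
    have hTpos : 0 < T := hΓpos u hu0
    -- generic FTC step via reflection
    have main : ∀ h : ℝ → ℝ, Measurable h →
        (∀ t, 0 < t → ContinuousWithinAt h (Set.Iic t) t) →
        IntegrableOn h (Set.Icc 0 T) volume →
        IntervalIntegrable (fun s => h (Γ s) * g (Γ s)) volume 0 u →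
        (∫ s in (0:ℝ)..T, h s) = ∫ s in (0:ℝ)..u, h (Γ s) * g (Γ s) := by
      intro h hm hcont hInt hprod
      have hImapsto : ∀ x : ℝ, 0 ≤ x → x ≤ u → Γ x ∈ Set.Icc (0:ℝ) T :=
        fun x h0 h1 => ⟨hΓ_nonneg x h0, hmonoM h0 hu h1⟩
      set F : ℝ → ℝ := fun t => ∫ s in (0:ℝ)..t, h s with hF
      have hFcont : ContinuousOn F (Set.Icc 0 T) := by
        have := intervalIntegral.continuousOn_primitive_interval
          (a := 0) (b := T) (f := h) (μ := volume) (by rwa [Set.uIcc_of_le hTpos.le])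
        rwa [Set.uIcc_of_le hTpos.le] at this
      have hWcont : ContinuousOn (fun x => F (Γ x)) (Set.Icc 0 u) :=
        hFcont.comp hΓ_cont.continuousOn (fun x hx => hImapsto x hx.1 hx.2)
      have hWderiv : ∀ x, x ∈ Set.Ioo (0:ℝ) u →
          HasDerivWithinAt (fun y => F (Γ y)) (h (Γ x) * g (Γ x)) (Set.Iio x) x := by
        intro x hx
        have hΓx : 0 < Γ x := hΓpos x hx.1
        have hFder : HasDerivWithinAt F (h (Γ x)) (Set.Iic (Γ x)) (Γ x) := by
          refine intervalIntegral.integral_hasDerivWithinAt_right ?_ ?_ (hcont _ hΓx)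
          · apply MeasureTheory.IntegrableOn.intervalIntegrable
            rw [Set.uIcc_of_le hΓx.le]
            exact hInt.mono_set (Set.Icc_subset_Icc le_rfl (hmonoM hx.1.le hu hx.2.le))
          · exact ⟨Set.univ, Filter.univ_mem, hm.aestronglyMeasurable.restrict⟩
        have hΓder : HasDerivWithinAt Γ (g (Γ x)) (Set.Icc 0 x) x :=
          (hDeriv x hx.1).mono Set.Icc_subset_Iic_self
        have hcomp := hFder.comp x hΓder
          (fun y hy => hmonoM hy.1 (show x ∈ Set.Ici (0:ℝ) from hx.1.le) hy.2)
        refine hcomp.mono_of_mem_nhdsWithin ?_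
        refine mem_nhdsWithin.2 ⟨Set.Ioi 0, isOpen_Ioi, hx.1, fun y hy => ?_⟩
        exact ⟨hy.1.le, hy.2.le⟩
      have refl_deriv : ∀ y ∈ Set.Ioo (0:ℝ) u,
          HasDerivWithinAt (fun y => -F (Γ (u - y)))
            (h (Γ (u - y)) * g (Γ (u - y))) (Set.Ioi y) y := by
        intro y hy
        have hx : u - y ∈ Set.Ioo (0:ℝ) u := ⟨by linarith [hy.2], by linarith [hy.1]⟩
        have hW := hWderiv (u - y) hx
        have hr : HasDerivWithinAt (fun y : ℝ => u - y) (-1) (Set.Ioi y) y :=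
          ((hasDerivAt_id y).const_sub u).hasDerivWithinAt
        have hmaps : Set.MapsTo (fun y : ℝ => u - y) (Set.Ioi y) (Set.Iio (u - y)) :=
          fun z hz => by simp only [Set.mem_Iio]; have := Set.mem_Ioi.1 hz; linarith
        have hcomp := (hW.comp y hr hmaps).neg
        have he : h (Γ (u - y)) * g (Γ (u - y)) = -(h (Γ (u - y)) * g (Γ (u - y)) * -1) := by ring
        rw [he]
        exact hcomp
      have hrcont : ContinuousOn (fun y => -F (Γ (u - y))) (Set.Icc 0 u) := by
        refine (hWcont.comp ((continuous_const.sub continuous_id).continuousOn)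
          (fun y hy => ?_)).neg
        exact ⟨by simp; linarith [hy.2], by simp; linarith [hy.1]⟩
      have hrint : IntervalIntegrable (fun y => h (Γ (u - y)) * g (Γ (u - y))) volume 0 u := by
        have := (hprod.comp_sub_left u).symm
        simpa using this
      have hftc := intervalIntegral.integral_eq_sub_of_hasDeriv_right_of_le hu0.le
        hrcont refl_deriv hrint
      have hval : (fun y => -F (Γ (u - y))) u - (fun y => -F (Γ (u - y))) 0 = F T := by
        simp only [sub_self, sub_zero, hΓ0]
        have hF0 : F 0 = 0 := intervalIntegral.integral_same
        rw [hF0]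
        ring
      rw [hval] at hftc
      have hsub : (∫ y in (0:ℝ)..u, h (Γ (u - y)) * g (Γ (u - y)))
          = ∫ s in (0:ℝ)..u, h (Γ s) * g (Γ s) := by
        have := intervalIntegral.integral_comp_sub_left
          (a := 0) (b := u) (fun s => h (Γ s) * g (Γ s)) u
        simpa using this
      rw [hsub] at hftc
      exact hftc.symm
    -- truncations
    have hnmeas : ∀ n : ℕ, Measurable (fun t => min (1 / G t) (n : ℝ)) :=
      fun n => (hGm.const_div 1).min measurable_const
    have hnnonneg : ∀ (n : ℕ) (t : ℝ), 0 ≤ min (1 / G t) (n : ℝ) :=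
      fun n t => le_min (one_div_nonneg.2 (hGpos t).le) (Nat.cast_nonneg n)
    have hnnorm : ∀ (n : ℕ) (t : ℝ), ‖min (1 / G t) (n : ℝ)‖ ≤ (n : ℝ) := by
      intro n t
      rw [Real.norm_eq_abs, abs_of_nonneg (hnnonneg n t)]
      exact min_le_right _ _
    have hnint : ∀ n : ℕ, IntegrableOn (fun t => min (1 / G t) (n : ℝ)) (Set.Icc 0 T) volume := by
      intro n
      have hconst : IntegrableOn (fun _ : ℝ => (n:ℝ)) (Set.Icc (0:ℝ) T) volume :=
        integrableOn_const measure_Icc_lt_top.ne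
      refine Integrable.mono' hconst (hnmeas n).aestronglyMeasurable.restrict ?_
      exact Filter.Eventually.of_forall fun t => hnnorm n t
    have hncont : ∀ (n : ℕ) (t : ℝ), 0 < t →
        ContinuousWithinAt (fun t => min (1 / G t) (n : ℝ)) (Set.Iic t) t := by
      intro n t ht
      have h1 : ContinuousWithinAt (fun t => min (1 / g t) (n : ℝ)) (Set.Iic t) t :=
        (continuousWithinAt_const.div (hg_left t ht) (hg_pos t ht.le).ne').min
          continuousWithinAt_const
      refine h1.congr_of_eventuallyEq ?_ (by rw [hGg t ht])
      filter_upwards [mem_nhdsWithin_of_mem_nhds (Ioi_mem_nhds ht)] with s hs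
      rw [hGg s hs]
    have hnprod : ∀ n : ℕ, IntervalIntegrable
        (fun s => min (1 / G (Γ s)) (n : ℝ) * g (Γ s)) volume 0 u := by
      intro n
      rw [intervalIntegrable_iff_integrableOn_Ioc_of_le hu0.le]
      refine Integrable.bdd_mul ?_ ?_ (Filter.Eventually.of_forall fun s => hnnorm n (Γ s))
      · exact (intervalIntegrable_iff_integrableOn_Ioc_of_le hu0.le).1 (hΓ_int u hu)
      · exact ((hnmeas n).comp hΓ_cont.measurable).aestronglyMeasurable.restrict
    have hone : IntervalIntegrable (fun _ : ℝ => (1:ℝ)) volume 0 u :=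
      _root_.intervalIntegrable_const
    have hnle : ∀ n : ℕ, (∫ s in (0:ℝ)..T, min (1 / G s) (n : ℝ)) ≤ u := by
      intro n
      rw [main (fun t => min (1 / G t) (n : ℝ)) (hnmeas n) (hncont n) (hnint n) (hnprod n)]
      have hle : (∫ s in (0:ℝ)..u, min (1 / G (Γ s)) (n : ℝ) * g (Γ s))
          ≤ ∫ s in (0:ℝ)..u, (1:ℝ) := by
        refine intervalIntegral.integral_mono_ae_restrict hu0.le (hnprod n) hone ?_
        have hzero : (volume.restrict (Set.Icc (0:ℝ) u)) {(0:ℝ)} = 0 := by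
          rw [Measure.restrict_apply (measurableSet_singleton 0)]
          exact measure_mono_null Set.inter_subset_left (measure_singleton 0)
        have hne : ∀ᵐ s ∂(volume.restrict (Set.Icc (0:ℝ) u)), s ≠ 0 := by
          refine (MeasureTheory.ae_iff).2 ?_
          convert hzero using 2
          ext s
          simp
        filter_upwards [ae_restrict_mem measurableSet_Icc, hne] with s hs hs0
        have hsp : 0 < s := lt_of_le_of_ne hs.1 (Ne.symm hs0)
        have hΓs : 0 < Γ s := hΓpos s hsp
        have : min (1 / G (Γ s)) (n : ℝ) * g (Γ s) ≤ (1 / G (Γ s)) * g (Γ s) :=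
          mul_le_mul_of_nonneg_right (min_le_left _ _) (hg_pos _ hΓs.le).le
        refine this.trans ?_
        rw [hGg _ hΓs, one_div, inv_mul_cancel₀ (hg_pos _ hΓs.le).ne']
      simpa using hle
    -- integrability of 1/G on [0,T]
    have hGint : IntegrableOn (fun t => 1 / G t) (Set.Icc 0 T) volume := by
      have hmeas1 : Measurable fun t : ℝ => 1 / G t := hGm.const_div 1
      refine ⟨hmeas1.aestronglyMeasurable.restrict, ?_⟩
      rw [hasFiniteIntegral_iff_ofReal
        (Filter.Eventually.of_forall fun t => one_div_nonneg.2 (hGpos t).le)]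
      have hsup : ∀ t : ℝ, (⨆ n : ℕ, ENNReal.ofReal (min (1 / G t) (n:ℝ)))
          = ENNReal.ofReal (1 / G t) := by
        intro t
        refine le_antisymm (iSup_le fun n => ENNReal.ofReal_le_ofReal (min_le_left _ _)) ?_
        refine le_iSup_of_le ⌈1 / G t⌉₊ (ENNReal.ofReal_le_ofReal ?_)
        exact (min_eq_left (Nat.le_ceil _)).symm.le
      have hmc : (∫⁻ t in Set.Icc (0:ℝ) T, ENNReal.ofReal (1 / G t))
          = ⨆ n : ℕ, ∫⁻ t in Set.Icc (0:ℝ) T, ENNReal.ofReal (min (1 / G t) (n:ℝ)) := by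
        rw [← lintegral_iSup (fun n => (hnmeas n).ennreal_ofReal) ?_]
        · refine lintegral_congr fun t => (hsup t).symm
        · intro i j hij t
          exact ENNReal.ofReal_le_ofReal (min_le_min le_rfl (Nat.cast_le.2 hij))
      rw [hmc]
      refine lt_of_le_of_lt (iSup_le fun n => ?_) (ENNReal.ofReal_lt_top (r := u))
      rw [← MeasureTheory.ofReal_integral_eq_lintegral_ofReal (hnint n)
        ((ae_restrict_iff' measurableSet_Icc).2
          (Filter.Eventually.of_forall fun t _ => hnnonneg n t))]
      refine ENNReal.ofReal_le_ofReal ?_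
      have hIcc : (∫ t in Set.Icc (0:ℝ) T, min (1 / G t) (n:ℝ))
          = ∫ t in (0:ℝ)..T, min (1 / G t) (n:ℝ) := by
        rw [intervalIntegral.integral_of_le hTpos.le, MeasureTheory.integral_Icc_eq_integral_Ioc]
      rw [hIcc]
      exact hnle n
    -- conclusion
    have haeq : (fun s => (1 / G (Γ s)) * g (Γ s))
        =ᵐ[volume.restrict (Set.Ioc 0 u)] (fun _ => (1:ℝ)) := by
      refine ((ae_restrict_iff' measurableSet_Ioc).2 (Filter.Eventually.of_forall fun s hs => ?_))
      have hΓs : 0 < Γ s := hΓpos s hs.1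
      show (1 / G (Γ s)) * g (Γ s) = 1
      rw [hGg _ hΓs, one_div, inv_mul_cancel₀ (hg_pos _ hΓs.le).ne']
    have hprod1 : IntervalIntegrable (fun s => (1 / G (Γ s)) * g (Γ s)) volume 0 u := by
      rw [intervalIntegrable_iff_integrableOn_Ioc_of_le hu0.le]
      exact ((integrableOn_const measure_Ioc_lt_top.ne).congr haeq.symm : _)
    have h1 : (∫ s in (0:ℝ)..T, 1 / G s) = ∫ s in (0:ℝ)..u, (1 / G (Γ s)) * g (Γ s) := by
      refine main (fun t => 1 / G t) (hGm.const_div 1) ?_ hGint hprod1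
      intro t ht
      have : ContinuousWithinAt (fun t => 1 / g t) (Set.Iic t) t :=
        (continuousWithinAt_const.div (hg_left t ht) (hg_pos t ht.le).ne')
      refine this.congr_of_eventuallyEq ?_ (by rw [hGg t ht])
      filter_upwards [mem_nhdsWithin_of_mem_nhds (Ioi_mem_nhds ht)] with s hs
      rw [hGg s hs]
    have h2 : (∫ s in (0:ℝ)..u, (1 / G (Γ s)) * g (Γ s)) = ∫ s in (0:ℝ)..u, (1:ℝ) := by
      refine intervalIntegral.integral_congr_ae ?_
      rw [Set.uIoc_of_le hu0.le]
      exact (ae_restrict_iff' measurableSet_Ioc).1 haeq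
    have h3 : (∫ s in (0:ℝ)..T, 1 / g s) = ∫ s in (0:ℝ)..T, 1 / G s := by
      refine intervalIntegral.integral_congr_ae ?_
      have : ∀ᵐ s : ℝ, s ∈ Set.Ioc 0 T → 1 / g s = 1 / G s := by
        refine Filter.Eventually.of_forall fun s hs => ?_
        rw [hGg s hs.1]
      simpa [Set.uIoc_of_le hTpos.le] using this
    rw [h3, h1, h2]
    simp
  refine ⟨hinj.bijOn_image, ?_⟩
  rintro t ⟨u, hu, rfl⟩
  rw [hinj.leftInvOn_invFunOn hu, key u hu]
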